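/- arXiv:2105.09673 — 4 statements merged into one kernel-verified Lean document; each statement's English description precedes it below -/
import Mathlib

section
/- The binary search invariant: let f : ℝ → ℝ be continuous piecewise affine with all critical points in (−1/δ, 1/δ) and each affine piece of length at least δ, no two pieces sharing the same affine function. Then after k iterations of bisection (keeping the left endpoint if the local affine function there matches the affine function just left of the midpoint), the interval [x_L, x_R] has length (2/δ)·2^{−k} and still contains the left-most critical point x* with x_L ≤ x* < x_R. -/
open Classical in
/-- the binary-search invariant. `xstar` is the left-most critical
point of `f`: `f` agrees with the affine map `Λ_L = sL * · + tL` on `(-∞, xstar]`,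
and (since no two pieces share the same affine function and pieces have length at
least δ) no left-neighborhood of a point `> xstar` agrees with `Λ_L`. The
bisection keeps the left endpoint when the local affine function in the left
proximity of the midpoint matches `Λ_L` (the local affine function at `x_L`). -/
theorem bisection_invariant (f : ℝ → ℝ) (δ : ℝ) (hδ : 0 < δ)
    (sL tL : ℝ) (xstar : ℝ)
    (hstar : xstar ∈ Set.Ioo (-(1/δ)) (1/δ))
    (hfL : ∀ x ≤ xstar, f x = sL * x + tL)
    (hnomatch : ∀ y > xstar, ∀ ε > 0, ∃ z ∈ Set.Ioo (y - ε) y, f z ≠ sL * z + tL)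
    (xL xR : ℕ → ℝ)
    (h0L : xL 0 = -(1/δ)) (h0R : xR 0 = 1/δ)
    (hstep : ∀ k,
      if ∃ ε > 0, ∀ z ∈ Set.Ioo ((xL k + xR k) / 2 - ε) ((xL k + xR k) / 2),
          f z = sL * z + tL
      then xL (k+1) = (xL k + xR k) / 2 ∧ xR (k+1) = xR k
      else xL (k+1) = xL k ∧ xR (k+1) = (xL k + xR k) / 2) :
    ∀ k, xR k - xL k = (2 / δ) * (2 : ℝ)⁻¹ ^ k ∧ xL k ≤ xstar ∧ xstar < xR k := by
  intro k
  induction k with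
  | zero =>
    refine ⟨?_, ?_, ?_⟩
    · rw [h0L, h0R, pow_zero, mul_one]; ring
    · rw [h0L]; exact hstar.1.le
    · rw [h0R]; exact hstar.2
  | succ k ih =>
    obtain ⟨hlen, hL, hR⟩ := ih
    have hs := hstep k
    by_cases hc : ∃ ε > 0, ∀ z ∈ Set.Ioo ((xL k + xR k) / 2 - ε) ((xL k + xR k) / 2),
        f z = sL * z + tL
    · rw [if_pos hc] at hs
      have hm : (xL k + xR k) / 2 ≤ xstar := by
        by_contra h
        push_neg at h
        obtain ⟨ε, hε, hall⟩ := hc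
        obtain ⟨z, hz, hne⟩ := hnomatch _ h ε hε
        exact hne (hall z hz)
      refine ⟨?_, hs.1 ▸ hm, hs.2 ▸ hR⟩
      rw [hs.1, hs.2, pow_succ, ← mul_assoc, ← hlen]; ring
    · rw [if_neg hc] at hs
      have hm : xstar < (xL k + xR k) / 2 := by
        by_contra h
        push_neg at h
        exact hc ⟨1, one_pos, fun z hz => hfL z (le_trans hz.2.le h)⟩
      refine ⟨?_, hs.1 ▸ hL, hs.2 ▸ hm⟩
      rw [hs.1, hs.2, pow_succ, ← mul_assoc, ← hlen]; ring
end

section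
/- Sign-identification test: let N(x) = F(σ(Wx + b)) where W ∈ ℝ^{d₁×d} has linearly independent unit-norm rows w_i, b ∈ ℝ^{d₁}, σ is coordinatewise ReLU, and F : ℝ^{d₁} → ℝ has nonzero directional derivatives in the directions ±e_k at every point of the nonnegative orthant. Let x satisfy w_1·x + b_1 = 0 with w_i·x + b_i > 0 for all i ≠ 1, and let z be a unit vector with w_i·z = 0 for i ≠ 1 and w_1·z > 0. Then for all sufficiently small ε > 0, N(x + εz) ≠ N(x) while N(x − εz) = N(x). -/
/-- sign-identification test for a first-layer neuron of a
depth-three ReLU network. -/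
theorem sign_identification_test (d d₁ : ℕ)
    (w : Fin d₁ → EuclideanSpace ℝ (Fin d)) (hw : LinearIndependent ℝ w)
    (hwnorm : ∀ i, ‖w i‖ = 1)
    (b : Fin d₁ → ℝ) (F : (Fin d₁ → ℝ) → ℝ)
    -- F has nonzero one-sided directional derivatives in directions ± e_k on ℝ₊^{d₁}
    (hF : ∀ y : Fin d₁ → ℝ, (∀ i, 0 ≤ y i) → ∀ k : Fin d₁,
      (∃ D : ℝ, D ≠ 0 ∧ Filter.Tendsto
        (fun t : ℝ => (F (y + t • (Pi.single k 1 : Fin d₁ → ℝ)) - F y) / t)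
        (nhdsWithin 0 (Set.Ioi 0)) (nhds D)) ∧
      (∃ D : ℝ, D ≠ 0 ∧ Filter.Tendsto
        (fun t : ℝ => (F (y - t • (Pi.single k 1 : Fin d₁ → ℝ)) - F y) / t)
        (nhdsWithin 0 (Set.Ioi 0)) (nhds D)))
    (N : EuclideanSpace ℝ (Fin d) → ℝ)
    (hN : ∀ x, N x = F fun i => max (inner ℝ (w i) x + b i) 0)
    (j₀ : Fin d₁) (x : EuclideanSpace ℝ (Fin d))
    (hx1 : inner ℝ (w j₀) x + b j₀ = (0 : ℝ))
    (hxi : ∀ i, i ≠ j₀ → 0 < (inner ℝ (w i) x : ℝ) + b i)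
    (z : EuclideanSpace ℝ (Fin d)) (hz : ‖z‖ = 1)
    (hzi : ∀ i, i ≠ j₀ → inner ℝ (w i) z = (0 : ℝ))
    (hz1 : 0 < (inner ℝ (w j₀) z : ℝ)) :
    ∃ ε₀ > 0, ∀ ε : ℝ, 0 < ε → ε < ε₀ →
      N (x + ε • z) ≠ N x ∧ N (x - ε • z) = N x := by
  classical
  set y : Fin d₁ → ℝ := fun i => max ((inner ℝ (w i) x : ℝ) + b i) 0 with hy
  have hy0 : ∀ i, 0 ≤ y i := fun i => le_max_right _ _
  obtain ⟨⟨D, hD, hDt⟩, -⟩ := hF y hy0 j₀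
  have hev : ∀ᶠ t in nhdsWithin 0 (Set.Ioi 0),
      (F (y + t • (Pi.single j₀ 1 : Fin d₁ → ℝ)) - F y) / t ≠ 0 :=
    hDt.eventually_ne hD
  rw [eventually_nhdsWithin_iff, Metric.eventually_nhds_iff] at hev
  obtain ⟨δ, hδ, hδ'⟩ := hev
  set c : ℝ := inner ℝ (w j₀) z with hc
  have key : ∀ s : ℝ, (fun i => max ((inner ℝ (w i) (x + s • z) : ℝ) + b i) 0)
      = y + (max (s * c) 0) • (Pi.single j₀ 1 : Fin d₁ → ℝ) := by
    intro s
    funext i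
    simp only [inner_add_right, real_inner_smul_right, Pi.add_apply, Pi.smul_apply,
      smul_eq_mul, hy]
    by_cases h : i = j₀
    · simp only [h, Pi.single_eq_same]
      have h0 : (inner ℝ (w j₀) x : ℝ) + s * c + b j₀ = s * c := by
        rw [hc]; linarith [hx1]
      rw [h0, hx1, mul_one]
      simp
    · rw [hzi i h, Pi.single_eq_of_ne h]
      ring_nf
  refine ⟨δ / c, div_pos hδ hz1, fun ε hε hε' => ?_⟩
  have hεc : 0 < ε * c := mul_pos hε hz1
  have hεcδ : ε * c < δ := by rwa [lt_div_iff₀ hz1] at hε'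
  have hNx : N x = F y := hN x
  constructor
  · rw [hN, key, hNx]
    have hmax : max (ε * c) 0 = ε * c := max_eq_left hεc.le
    rw [hmax]
    intro heq
    have hne : (F (y + (ε * c) • (Pi.single j₀ 1 : Fin d₁ → ℝ)) - F y) / (ε * c) ≠ 0 :=
      hδ' (by rw [Real.dist_eq, sub_zero, abs_of_pos hεc]; exact hεcδ) (Set.mem_Ioi.mpr hεc)
    apply hne
    rw [heq, sub_self, zero_div]
  · have : x - ε • z = x + (-ε) • z := by rw [neg_smul, sub_eq_add_neg]
    rw [hN, this, key, hNx]
    have hmax : max ((-ε) * c) 0 = 0 := max_eq_right (by nlinarith)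
    rw [hmax, zero_smul, add_zero]
end

section
/- Let Λ : ℝ^d → ℝ^{d₁} be an affine map, Λ(x) = (w_1·x + b_1, …, w_{d₁}·x + b_{d₁}). Then the hypothesis class H = {j ↦ sign(Λ(x)(j)) : x ∈ ℝ^d, Λ(x)(j) ≠ 0 for all j} of sign patterns realized on the d₁ coordinates by the image of Λ has cardinality at most Σ_{i=0}^{d+1} C(d₁, i). -/
open Finset

/-- Key lemma: a family of sign-pattern sets from affine functionals on `ℝ^d`
cannot shatter a set of size `d+2`. -/
lemma no_shatter_aux (d d₁ : ℕ) (w : Fin d₁ → Fin d → ℝ) (b : Fin d₁ → ℝ)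
    (𝒜 : Finset (Finset (Fin d₁)))
    (h𝒜 : ∀ A ∈ 𝒜, ∃ x : Fin d → ℝ, (∀ j, ∑ k, w j k * x k + b j ≠ 0) ∧
      ∀ j, (j ∈ A ↔ 0 < ∑ k, w j k * x k + b j))
    (t : Finset (Fin d₁)) (ht : t.card = d + 2) (hsh : 𝒜.Shatters t) : False := by
  classical
  -- vectors (w j, b j) in a (d+1)-dimensional space, d+2 of them: linearly dependent
  have hdep : ¬ LinearIndependent ℝ (fun j : t => ((w j, b j) : (Fin d → ℝ) × ℝ)) := by
    intro h
    have := h.fintype_card_le_finrank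
    rw [Fintype.card_coe, ht] at this
    have hfr : Module.finrank ℝ ((Fin d → ℝ) × ℝ) = d + 1 := by
      simp [Module.finrank_prod]
    omega
  obtain ⟨g, hg0, j₀, hj₀⟩ := Fintype.not_linearIndependent_iff.mp hdep
  set gg : Fin d₁ → ℝ := fun j => if h : j ∈ t then g ⟨j, h⟩ else 0 with hgg
  have hggt : ∀ j : t, gg j = g j := fun j => by simp [hgg, j.2]
  have hsum : ∑ j ∈ t, gg j • ((w j, b j) : (Fin d → ℝ) × ℝ) = 0 := by
    rw [← Finset.sum_attach t (fun j => gg j • ((w j, b j) : (Fin d → ℝ) × ℝ))]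
    rw [← hg0]
    exact Finset.sum_congr rfl fun j _ => by rw [hggt]
  have hw : ∀ k, ∑ j ∈ t, gg j * w j k = 0 := by
    intro k
    have h1 := congrArg Prod.fst hsum
    rw [Prod.fst_sum] at h1
    have h2 := congrFun h1 k
    simpa [Finset.sum_apply] using h2
  have hb : ∑ j ∈ t, gg j * b j = 0 := by
    have h1 := congrArg Prod.snd hsum
    rw [Prod.snd_sum] at h1
    simpa [smul_eq_mul] using h1
  -- use shattering to pick a set matching the signs of gg
  obtain ⟨A, hA, hAt⟩ := hsh (Finset.filter_subset (fun j => 0 < gg j) t)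
  obtain ⟨x, hx0, hxA⟩ := h𝒜 A hA
  set f : Fin d₁ → ℝ := fun j => ∑ k, w j k * x k + b j with hf
  have hsign : ∀ j ∈ t, (0 < gg j ↔ 0 < f j) := by
    intro j hj
    rw [← hxA j]
    constructor
    · intro h
      have hm : j ∈ t ∩ A := by rw [hAt]; exact Finset.mem_filter.2 ⟨hj, h⟩
      exact (Finset.mem_inter.1 hm).2
    · intro h
      have hm : j ∈ t ∩ A := Finset.mem_inter.2 ⟨hj, h⟩
      rw [hAt] at hm
      exact (Finset.mem_filter.1 hm).2
  have hnn : ∀ j ∈ t, 0 ≤ gg j * f j := by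
    intro j hj
    rcases lt_trichotomy (gg j) 0 with h | h | h
    · have hfj : f j < 0 := by
        rcases (hx0 j).lt_or_gt with h' | h'
        · exact h'
        · exact absurd ((hsign j hj).2 h') (not_lt.2 h.le)
      exact le_of_lt (mul_pos_of_neg_of_neg h hfj)
    · simp [h]
    · exact le_of_lt (mul_pos h ((hsign j hj).1 h))
  have hpos : 0 < ∑ j ∈ t, gg j * f j := by
    refine Finset.sum_pos' hnn ⟨j₀, j₀.2, ?_⟩
    have hg' : gg j₀ ≠ 0 := by rw [hggt]; exact hj₀
    rcases lt_trichotomy (gg (j₀ : Fin d₁)) 0 with h | h | h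
    · have hfj : f j₀ < 0 := by
        rcases (hx0 j₀).lt_or_gt with h' | h'
        · exact h'
        · exact absurd ((hsign j₀ j₀.2).2 h') (not_lt.2 h.le)
      exact mul_pos_of_neg_of_neg h hfj
    · exact absurd h hg'
    · exact mul_pos h ((hsign j₀ j₀.2).1 h)
  have hzero : ∑ j ∈ t, gg j * f j = 0 := by
    have : ∑ j ∈ t, gg j * f j
        = (∑ k, (∑ j ∈ t, gg j * w j k) * x k) + ∑ j ∈ t, gg j * b j := by
      simp_rw [hf, mul_add, Finset.sum_add_distrib, Finset.mul_sum, Finset.sum_mul]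
      rw [Finset.sum_comm]
      ring_nf
    rw [this, hb]
    simp [hw]
  exact absurd hzero (ne_of_gt hpos)

/-- the number of sign patterns realized by an affine map
`Λ : ℝ^d → ℝ^{d₁}` on its `d₁` coordinates is at most `∑_{i=0}^{d+1} C(d₁, i)`. -/
theorem sign_patterns_card_le (d d₁ : ℕ)
    (w : Fin d₁ → Fin d → ℝ) (b : Fin d₁ → ℝ) :
    let H : Set (Fin d₁ → ℝ) :=
      {s | ∃ x : Fin d → ℝ, (∀ j, ∑ k, w j k * x k + b j ≠ 0) ∧
        ∀ j, s j = Real.sign (∑ k, w j k * x k + b j)}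
    H.Finite ∧ H.ncard ≤ ∑ i ∈ Finset.range (d + 2), Nat.choose d₁ i := by
  intro H
  classical
  set 𝒜 : Finset (Finset (Fin d₁)) :=
    (Set.toFinite {A : Finset (Fin d₁) | ∃ x : Fin d → ℝ,
      (∀ j, ∑ k, w j k * x k + b j ≠ 0) ∧
      ∀ j, (j ∈ A ↔ 0 < ∑ k, w j k * x k + b j)}).toFinset with h𝒜def
  have hmem : ∀ A : Finset (Fin d₁), A ∈ 𝒜 ↔ ∃ x : Fin d → ℝ,
      (∀ j, ∑ k, w j k * x k + b j ≠ 0) ∧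
      ∀ j, (j ∈ A ↔ 0 < ∑ k, w j k * x k + b j) := by
    intro A; rw [h𝒜def, Set.Finite.mem_toFinset]; rfl
  have hHeq : H = (fun A : Finset (Fin d₁) => fun j => if j ∈ A then (1:ℝ) else -1) '' ↑𝒜 := by
    ext s
    constructor
    · rintro ⟨x, hx0, hxs⟩
      refine ⟨Finset.univ.filter (fun j => 0 < ∑ k, w j k * x k + b j), ?_, ?_⟩
      · rw [Finset.mem_coe, hmem]
        exact ⟨x, hx0, fun j => by simp⟩
      · funext j
        rw [hxs j]
        rcases (hx0 j).lt_or_gt with h | h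
        · simp [Real.sign_of_neg h, not_lt.2 h.le]
        · simp [Real.sign_of_pos h, h]
    · rintro ⟨A, hA, rfl⟩
      rw [Finset.mem_coe, hmem] at hA
      obtain ⟨x, hx0, hxA⟩ := hA
      refine ⟨x, hx0, fun j => ?_⟩
      by_cases h : j ∈ A
      · simp [h, Real.sign_of_pos ((hxA j).1 h)]
      · have : ¬ 0 < ∑ k, w j k * x k + b j := fun h' => h ((hxA j).2 h')
        have hneg : ∑ k, w j k * x k + b j < 0 := (hx0 j).lt_of_le (not_lt.1 this)
        simp [h, Real.sign_of_neg hneg]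
  have hfin : H.Finite := by
    rw [hHeq]; exact (𝒜.finite_toSet.image _)
  refine ⟨hfin, ?_⟩
  have hcard1 : H.ncard ≤ 𝒜.card := by
    rw [hHeq]
    calc _ ≤ (↑𝒜 : Set (Finset (Fin d₁))).ncard := Set.ncard_image_le 𝒜.finite_toSet
    _ = 𝒜.card := Set.ncard_coe_finset 𝒜
  have hvc : 𝒜.vcDim ≤ d + 1 := by
    rw [Finset.vcDim]
    refine Finset.sup_le fun s hs => ?_
    by_contra hlt
    push_neg at hlt
    obtain ⟨t, hts, htc⟩ := Finset.exists_subset_card_eq (show d + 2 ≤ s.card from hlt)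
    exact no_shatter_aux d d₁ w b 𝒜 (fun A hA => (hmem A).1 hA) t htc
      (((Finset.mem_shatterer.1 hs).mono_right hts))
  calc H.ncard ≤ 𝒜.card := hcard1
    _ ≤ 𝒜.shatterer.card := Finset.card_le_card_shatterer 𝒜
    _ ≤ ∑ k ∈ Finset.Iic 𝒜.vcDim, (Fintype.card (Fin d₁)).choose k :=
        Finset.card_shatterer_le_sum_vcDim
    _ ≤ ∑ i ∈ Finset.range (d + 2), Nat.choose d₁ i := by
        rw [Fintype.card_fin]
        refine Finset.sum_le_sum_of_subset fun k hk => ?_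
        rw [Finset.mem_Iic] at hk
        rw [Finset.mem_range]
        omega
end

section
/- Let (w_j, b_j) ∈ ℝ^d × ℝ, j = 1, …, d₁, be independent random variables each with a symmetric distribution (i.e., (w_j, b_j) has the same law as (−w_j, −b_j)), and let Λ(x) = (w_1·x + b_1, …, w_{d₁}·x + b_{d₁}). Suppose almost surely the number of orthants of ℝ^{d₁} intersected by Λ(ℝ^d) is at most (e·d₁/d)^{d+1}. Then the probability that Λ(ℝ^d) intersects the open negative orthant ℝ₋^{d₁} is at most (e·d₁/d)^{d+1} / 2^{d₁}. -/
open MeasureTheory ProbabilityTheory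
open scoped ENNReal

lemma map_fun_eq_pi_map' {Ω ι : Type*} [Fintype ι] [MeasurableSpace Ω]
    {β : ι → Type*} [mβ : ∀ i, MeasurableSpace (β i)]
    (μ : Measure Ω) [IsProbabilityMeasure μ] {f : ∀ i, Ω → β i}
    (hf : ∀ i, Measurable (f i))
    (h : iIndepFun f μ) :
    μ.map (fun ω i => f i ω) = Measure.pi (fun i => μ.map (f i)) := by
  haveI : ∀ i, IsProbabilityMeasure (μ.map (f i)) :=
    fun i => Measure.isProbabilityMeasure_map (hf i).aemeasurable
  refine (Measure.pi_eq fun s hs => ?_).symm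
  rw [Measure.map_apply (measurable_pi_lambda _ hf) (MeasurableSet.univ_pi hs)]
  have heq : (fun ω i => f i ω) ⁻¹' Set.pi Set.univ s = ⋂ i ∈ Finset.univ, f i ⁻¹' s i := by
    ext ω; simp [Set.mem_pi]
  rw [heq, h.measure_inter_preimage_eq_mul Finset.univ (fun i _ => hs i)]
  exact Finset.prod_congr rfl fun i _ => (Measure.map_apply (hf i) (hs i)).symm

/-- if the pairs `(w_j, b_j)` are independent and symmetric, and the
image of the affine map `Λ(x) = (w_j·x + b_j)_j` almost surely meets at most
`(e d₁ / d)^{d+1}` orthants, then the probability that it meets the open negative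
orthant is at most `(e d₁ / d)^{d+1} / 2^{d₁}`. -/
theorem prob_hits_negative_orthant_le
    {Ω : Type*} [MeasurableSpace Ω] (P : Measure Ω) [IsProbabilityMeasure P]
    (d d₁ : ℕ)
    (w : Fin d₁ → Ω → (Fin d → ℝ)) (b : Fin d₁ → Ω → ℝ)
    (hmeas : ∀ j, Measurable fun ω => (w j ω, b j ω))
    (hindep : iIndepFun (fun j ω => (w j ω, b j ω)) P)
    (hsymm : ∀ j, IdentDistrib (fun ω => (w j ω, b j ω))
      (fun ω => (-(w j ω), -(b j ω))) P P)
    (horthants : ∀ᵐ ω ∂P,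
      Set.ncard {ε : Fin d₁ → Bool |
          ∃ x : Fin d → ℝ, ∀ j,
            0 < (if ε j then 1 else -1 : ℝ) * (∑ k, w j ω k * x k + b j ω)} ≤
        (Real.exp 1 * d₁ / d) ^ (d + 1)) :
    P {ω | ∃ x : Fin d → ℝ, ∀ j, ∑ k, w j ω k * x k + b j ω < 0} ≤
      ENNReal.ofReal ((Real.exp 1 * d₁ / d) ^ (d + 1) / 2 ^ d₁) := by
  classical
  set B : ℝ := (Real.exp 1 * d₁ / d) ^ (d + 1) with hBdef
  set f : Fin d₁ → Ω → (Fin d → ℝ) × ℝ := fun j ω => (w j ω, b j ω) with hfdef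
  set X : Ω → (Fin d₁ → (Fin d → ℝ) × ℝ) := fun ω j => f j ω with hXdef
  have hX : Measurable X := measurable_pi_lambda _ fun j => hmeas j
  set S : (Fin d₁ → Bool) → Set (Fin d₁ → (Fin d → ℝ) × ℝ) := fun ε =>
    {g | ∃ x : Fin d → ℝ, ∀ j, 0 < (if ε j then 1 else -1 : ℝ) *
      (∑ k, (g j).1 k * x k + (g j).2)} with hSdef
  have hSopen : ∀ ε, IsOpen (S ε) := by
    intro ε
    have hU : S ε = ⋃ x : Fin d → ℝ, ⋂ j, {g : Fin d₁ → (Fin d → ℝ) × ℝ |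
        0 < (if ε j then 1 else -1 : ℝ) * (∑ k, (g j).1 k * x k + (g j).2)} := by
      ext g; simp [hSdef, Set.mem_iUnion, Set.mem_iInter]
    rw [hU]
    refine isOpen_iUnion fun x => isOpen_iInter_of_finite fun j => ?_
    refine isOpen_lt continuous_const ?_
    fun_prop
  have hSmeas : ∀ ε, MeasurableSet (S ε) := fun ε => (hSopen ε).measurableSet
  set A : (Fin d₁ → Bool) → Set Ω := fun ε => X ⁻¹' S ε with hAdef
  have hAmeas : ∀ ε, MeasurableSet (A ε) := fun ε => hX (hSmeas ε)
  set ε₀ : Fin d₁ → Bool := fun _ => false with hε₀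
  -- symmetry: all A ε have the same probability
  have hkey : ∀ ε, P (A ε) = P (A ε₀) := by
    intro ε
    set φ : Fin d₁ → ((Fin d → ℝ) × ℝ) → ((Fin d → ℝ) × ℝ) := fun j p =>
      if ε j then (-p.1, -p.2) else p with hφdef
    have hφmeas : ∀ j, Measurable (φ j) := by
      intro j
      cases hc : ε j <;> simp only [hφdef, hc] <;> simp <;> fun_prop
    set Y : Ω → (Fin d₁ → (Fin d → ℝ) × ℝ) := fun ω j => φ j (f j ω) with hYdef
    have hYmeas : ∀ j, Measurable fun ω => φ j (f j ω) :=
      fun j => (hφmeas j).comp (hmeas j)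
    have hYindep : iIndepFun (fun j ω => φ j (f j ω)) P :=
      hindep.comp φ hφmeas
    have hmarg : ∀ j, P.map (fun ω => φ j (f j ω)) = P.map (f j) := by
      intro j
      cases hc : ε j <;> simp only [hφdef, hfdef, hc] <;> simp
      exact ((hsymm j).map_eq).symm
    have hlawY : P.map Y = P.map X := by
      rw [hXdef, hYdef, map_fun_eq_pi_map' P hYmeas hYindep,
        map_fun_eq_pi_map' P hmeas hindep]
      exact congrArg Measure.pi (funext hmarg)
    have hflip : ∀ (jj : Fin d₁) (ω : Ω) (x : Fin d → ℝ),
        (-1 : ℝ) * (∑ k, (φ jj (f jj ω)).1 k * x k + (φ jj (f jj ω)).2)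
        = (if ε jj then 1 else -1 : ℝ) * (∑ k, w jj ω k * x k + b jj ω) := by
      intro jj ω x
      cases hc : ε jj <;>
        simp [hφdef, hfdef, hc, Pi.neg_apply, neg_mul, Finset.sum_neg_distrib] <;> ring
    have hAeq : A ε = Y ⁻¹' S ε₀ := by
      ext ω
      simp only [hAdef, hSdef, Set.mem_preimage, Set.mem_setOf_eq, hε₀, hYdef, hXdef, hfdef,
        Bool.false_eq_true, if_false]
      exact exists_congr fun x => (forall_congr' fun j => by rw [hflip j ω x]).symm
    have hYm : Measurable Y := measurable_pi_lambda _ hYmeas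
    calc P (A ε) = P.map Y (S ε₀) := by
          rw [hAeq, Measure.map_apply hYm (hSmeas ε₀)]
      _ = P.map X (S ε₀) := by rw [hlawY]
      _ = P (A ε₀) := by rw [Measure.map_apply hX (hSmeas ε₀)]
  -- counting: sum of indicators equals ncard
  have hcount : ∀ ω : Ω, (∑ ε : Fin d₁ → Bool, (A ε).indicator (1 : Ω → ℝ≥0∞) ω)
      = ((Set.ncard {ε : Fin d₁ → Bool | ω ∈ A ε} : ℕ) : ℝ≥0∞) := by
    intro ω
    have h1 : {ε : Fin d₁ → Bool | ω ∈ A ε} =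
        ↑(Finset.univ.filter fun ε : Fin d₁ → Bool => ω ∈ A ε) := by
      ext ε; simp
    rw [h1, Set.ncard_coe_finset, Finset.card_filter]
    push_cast
    simp [Set.indicator_apply]
  -- integrate
  have hsum : ∑ ε : Fin d₁ → Bool, P (A ε) = (2 : ℝ≥0∞) ^ d₁ * P (A ε₀) := by
    rw [Finset.sum_congr rfl fun ε _ => hkey ε]
    simp [Finset.card_univ]
  have hintle : (2 : ℝ≥0∞) ^ d₁ * P (A ε₀) ≤ ENNReal.ofReal B := by
    rw [← hsum]
    have h1 : ∑ ε : Fin d₁ → Bool, P (A ε)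
        = ∫⁻ ω, ∑ ε : Fin d₁ → Bool, (A ε).indicator (1 : Ω → ℝ≥0∞) ω ∂P := by
      rw [lintegral_finset_sum _ fun ε _ => measurable_one.indicator (hAmeas ε)]
      exact Finset.sum_congr rfl fun ε _ => (lintegral_indicator_one (hAmeas ε)).symm
    rw [h1]
    have h2 : ∫⁻ _, ENNReal.ofReal B ∂P = ENNReal.ofReal B := by simp
    rw [← h2]
    refine lintegral_mono_ae ?_
    filter_upwards [horthants] with ω hω
    rw [hcount ω]
    have hset : {ε : Fin d₁ → Bool | ω ∈ A ε} = {ε : Fin d₁ → Bool |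
        ∃ x : Fin d → ℝ, ∀ j, 0 < (if ε j then 1 else -1 : ℝ) *
          (∑ k, w j ω k * x k + b j ω)} := by
      ext ε; simp [hAdef, hSdef, hXdef, hfdef]
    rw [hset]
    calc ((Set.ncard _ : ℕ) : ℝ≥0∞) = ENNReal.ofReal ((Set.ncard _ : ℕ) : ℝ) := by
          rw [ENNReal.ofReal_natCast]
      _ ≤ ENNReal.ofReal B := ENNReal.ofReal_le_ofReal hω
  -- identify goal set with A ε₀
  have hgoal : {ω | ∃ x : Fin d → ℝ, ∀ j, ∑ k, w j ω k * x k + b j ω < 0} = A ε₀ := by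
    ext ω
    simp only [hAdef, hSdef, hXdef, hfdef, hε₀, Set.mem_preimage, Set.mem_setOf_eq,
      Bool.false_eq_true, if_false]
    constructor
    · rintro ⟨x, hx⟩; exact ⟨x, fun j => by have := hx j; nlinarith⟩
    · rintro ⟨x, hx⟩; exact ⟨x, fun j => by have := hx j; nlinarith⟩
  rw [hgoal]
  have h2pow : (2 : ℝ≥0∞) ^ d₁ = ENNReal.ofReal ((2 : ℝ) ^ d₁) := by
    rw [ENNReal.ofReal_pow (by norm_num)]
    norm_num
  have hdiv : ENNReal.ofReal (B / 2 ^ d₁) = ENNReal.ofReal B / (2 : ℝ≥0∞) ^ d₁ := by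
    rw [ENNReal.ofReal_div_of_pos (by positivity), h2pow]
  rw [hdiv, ENNReal.le_div_iff_mul_le (Or.inl (pow_ne_zero _ two_ne_zero)) (Or.inl (ENNReal.pow_ne_top ENNReal.ofNat_ne_top)),
    mul_comm]
  exact hintle
end
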